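/- Consider the two-wave Hamiltonian H(q, p, t) = ½p² − μ·cos(2πq) − μν·cos(2πk(q − t)) with parameters μ, ν ∈ ℝ and k a positive integer, and the first-order approximate invariant J(q, p, t) = −½p² + ⅓p³ − μ·((p − 1)·cos(2πq) + ν·p·cos(2πk(q − t))). Let G(q, t) = cos(2πq) + ν·cos(2πk(q − t)). Then along every C¹ solution (q(t), p(t)) of Hamilton's equations q̇ = ∂H/∂p, ṗ = −∂H/∂q, the derivative of J along the flow satisfies d/dt [J(q(t), p(t), t)] = −μ²·G(q(t), t)·∂G/∂q(q(t), t) = −(μ²/2)·∂/∂q[G²](q(t), t). In particular, all terms of order μ cancel identically and J is an adiabatic invariant correct to first order in μ. -/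

import Mathlib

/-- The two-wave Hamiltonian `H(q, p, t) = ½p² − μ cos(2πq) − μν cos(2πk(q − t))`. -/
noncomputable def twoWaveH (μ ν : ℝ) (k : ℕ) (q p t : ℝ) : ℝ :=
  p ^ 2 / 2 - μ * Real.cos (2 * Real.pi * q) - μ * ν * Real.cos (2 * Real.pi * k * (q - t))

/-- The first-order approximate invariant
`J(q, p, t) = −½p² + ⅓p³ − μ ((p − 1) cos(2πq) + ν p cos(2πk(q − t)))`. -/
noncomputable def twoWaveJ (μ ν : ℝ) (k : ℕ) (q p t : ℝ) : ℝ :=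
  -(p ^ 2) / 2 + p ^ 3 / 3
    - μ * ((p - 1) * Real.cos (2 * Real.pi * q) + ν * p * Real.cos (2 * Real.pi * k * (q - t)))

/-- `G(q, t) = cos(2πq) + ν cos(2πk(q − t))`. -/
noncomputable def twoWaveG (ν : ℝ) (k : ℕ) (q t : ℝ) : ℝ :=
  Real.cos (2 * Real.pi * q) + ν * Real.cos (2 * Real.pi * k * (q - t))

/-- Along every `C¹` solution `(Q(t), P(t))` of Hamilton's equations
`q̇ = ∂H/∂p`, `ṗ = −∂H/∂q` for the two-wave Hamiltonian, the derivative of the first-order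
approximate invariant `J` along the flow satisfies
`d/dt J(Q(t), P(t), t) = −μ² G(Q(t), t) ∂G/∂q(Q(t), t) = −(μ²/2) ∂/∂q[G²](Q(t), t)`;
in particular all terms of order `μ` cancel and `J` is an adiabatic invariant correct to
first order in `μ`. -/
theorem stmt17 (μ ν : ℝ) (k : ℕ) (hk : 0 < k) (Q P : ℝ → ℝ)
    (hQ : ∀ t, HasDerivAt Q (deriv (fun p => twoWaveH μ ν k (Q t) p t) (P t)) t)
    (hP : ∀ t, HasDerivAt P (-(deriv (fun q => twoWaveH μ ν k q (P t) t) (Q t))) t)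
    (t : ℝ) :
    HasDerivAt (fun s => twoWaveJ μ ν k (Q s) (P s) s)
      (-μ ^ 2 * twoWaveG ν k (Q t) t * deriv (fun q => twoWaveG ν k q t) (Q t)) t ∧
    -μ ^ 2 * twoWaveG ν k (Q t) t * deriv (fun q => twoWaveG ν k q t) (Q t)
      = -(μ ^ 2 / 2) * deriv (fun q => (twoWaveG ν k q t) ^ 2) (Q t) := by

  -- basic derivative facts
  have hcos1 : ∀ x : ℝ, HasDerivAt (fun q : ℝ => Real.cos (2 * Real.pi * q))
      (-Real.sin (2 * Real.pi * x) * (2 * Real.pi)) x := by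
    intro x
    have h0 : HasDerivAt (fun q : ℝ => 2 * Real.pi * q) (2 * Real.pi) x := by
      simpa using (hasDerivAt_id x).const_mul (2 * Real.pi)
    exact h0.cos
  have hcos2 : ∀ x : ℝ, HasDerivAt (fun q : ℝ => Real.cos (2 * Real.pi * k * (q - t)))
      (-Real.sin (2 * Real.pi * k * (x - t)) * (2 * Real.pi * k)) x := by
    intro x
    have h0 : HasDerivAt (fun q : ℝ => 2 * Real.pi * (k : ℝ) * (q - t)) (2 * Real.pi * k) x := by
      simpa using ((hasDerivAt_id x).sub_const t).const_mul (2 * Real.pi * (k : ℝ))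
    exact h0.cos
  -- derivative of G in q
  have hG : HasDerivAt (fun q => twoWaveG ν k q t)
      (-Real.sin (2 * Real.pi * Q t) * (2 * Real.pi)
        + ν * (-Real.sin (2 * Real.pi * k * (Q t - t)) * (2 * Real.pi * k))) (Q t) := by
    unfold twoWaveG
    exact (hcos1 (Q t)).add ((hcos2 (Q t)).const_mul ν)
  -- Q' = P
  have hQ' : HasDerivAt Q (P t) t := by
    have h := hQ t
    have hd : HasDerivAt (fun p => twoWaveH μ ν k (Q t) p t) (P t) (P t) := by
      unfold twoWaveH
      have h1 : HasDerivAt (fun p : ℝ => p ^ 2 / 2) (P t) (P t) := by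
        have := (hasDerivAt_pow 2 (P t)).div_const 2
        norm_num at this
        exact this
      simpa using (h1.sub_const (μ * Real.cos (2 * Real.pi * Q t))).sub_const
        (μ * ν * Real.cos (2 * Real.pi * k * (Q t - t)))
    rwa [hd.deriv] at h
  -- P' = -∂H/∂q
  have hHq : HasDerivAt (fun q => twoWaveH μ ν k q (P t) t)
      (0 - μ * (-Real.sin (2 * Real.pi * Q t) * (2 * Real.pi))
        - μ * ν * (-Real.sin (2 * Real.pi * k * (Q t - t)) * (2 * Real.pi * k))) (Q t) := by
    unfold twoWaveH
    exact ((hasDerivAt_const (Q t) ((P t) ^ 2 / 2)).sub ((hcos1 (Q t)).const_mul μ)).sub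
      ((hcos2 (Q t)).const_mul (μ * ν))
  have hP' : HasDerivAt P
      (-(0 - μ * (-Real.sin (2 * Real.pi * Q t) * (2 * Real.pi))
        - μ * ν * (-Real.sin (2 * Real.pi * k * (Q t - t)) * (2 * Real.pi * k)))) t := by
    have h := hP t
    rwa [hHq.deriv] at h
  -- pieces along the flow
  have hC1 : HasDerivAt (fun s => Real.cos (2 * Real.pi * Q s))
      (-Real.sin (2 * Real.pi * Q t) * (2 * Real.pi * P t)) t :=
    ((hQ'.const_mul (2 * Real.pi)).cos)
  have hC2 : HasDerivAt (fun s => Real.cos (2 * Real.pi * k * (Q s - s)))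
      (-Real.sin (2 * Real.pi * k * (Q t - t)) * (2 * Real.pi * k * (P t - 1))) t :=
    ((hQ'.sub (hasDerivAt_id t)).const_mul (2 * Real.pi * (k : ℝ))).cos
  have hbig := ((((hP'.pow 2).neg.div_const 2).add ((hP'.pow 3).div_const 3)).sub
    ((((hP'.sub_const 1).mul hC1).add (((hP'.const_mul ν).mul hC2))).const_mul μ))
  constructor
  · have hfun : (fun s => twoWaveJ μ ν k (Q s) (P s) s) =
        (fun s => -(P s ^ 2) / 2 + P s ^ 3 / 3
          - μ * ((P s - 1) * Real.cos (2 * Real.pi * Q s)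
            + ν * P s * Real.cos (2 * Real.pi * k * (Q s - s)))) := by
      funext s; simp [twoWaveJ]
    rw [hfun, hG.deriv]
    refine HasDerivAt.congr_deriv hbig ?_
    simp only [twoWaveG]
    ring
  · rw [hG.deriv, show (fun q => twoWaveG ν k q t ^ 2) = (fun q => twoWaveG ν k q t) ^ 2 from rfl,
      ((hG.pow 2)).deriv]
    ring
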